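/- Let d ≥ 3 and let z_1, …, z_d ∈ ℤ^d be a basis of ℤ^d such that z̲_1, …, z̲_{d−1} are linearly independent and z̲_2, …, z̲_d are linearly independent in ℝ^{d−1}, |z̲_1| ≤ |z̲_2| ≤ |z̲_3|, and ⟨z̲_1, z̲_2⟩ ≤ 0. If d ≥ 4, assume moreover that det Λ̲_{1,n} > |z̲_2| · det Λ̲_{1,n−1} for n = 3, …, d−1. Let α ∈ 𝔖_1 ∩ int 𝔖_2 (where int 𝔖_2 = { x ∈ π_d : |x − α_2| < R_2 }) satisfy ⟨α, z_2⟩ · ⟨α_2, z_1⟩ ≥ 0. Then 1/(2 D_{2,d−1} B_1^{d−1}) ≤ |L_α(z_1)| · |z̲_1|^{d−1} ≤ 3/(2 D_{2,d−1} B_1^{d−1}). -/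

import Mathlib

open scoped InnerProductSpace

noncomputable section

/-- `ℝ^n` with the Euclidean structure. -/
abbrev E (n : ℕ) : Type := EuclideanSpace ℝ (Fin n)

/-- The projection `x ↦ x̲` forgetting the last coordinate. -/
def pr (d : ℕ) (x : E d) : E (d - 1) :=
  WithLp.toLp 2 (fun i : Fin (d - 1) => x (Fin.castLE (Nat.sub_le d 1) i))

/-- The canonical embedding of `ℤ^d` into `ℝ^d`. -/
def toE (d : ℕ) (z : Fin d → ℤ) : E d := WithLp.toLp 2 (fun i => (z i : ℝ))

/-- The `m`-dimensional volume of the parallelepiped spanned by `v 0, …, v (m-1)`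
(square root of the Gram determinant). -/
def gramVol {n m : ℕ} (v : Fin m → E n) : ℝ :=
  Real.sqrt ((Matrix.of (fun i j : Fin m => ⟪v i, v j⟫_ℝ)).det)

/-- `z` is a best approximation vector for the linear form `L_α : x ↦ ⟪α, x⟫`. -/
def IsBestApprox (d : ℕ) (α : E d) (z : Fin d → ℤ) : Prop :=
  pr d (toE d z) ≠ 0 ∧
  ∀ z' : Fin d → ℤ, pr d (toE d z') ≠ 0 →
    (‖pr d (toE d z')‖ ≤ ‖pr d (toE d z)‖ → |⟪α, toE d z⟫_ℝ| ≤ |⟪α, toE d z'⟫_ℝ|) ∧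
    (‖pr d (toE d z')‖ < ‖pr d (toE d z)‖ → |⟪α, toE d z⟫_ℝ| < |⟪α, toE d z'⟫_ℝ|)

/-- `det Λ̲_{k,l}` for a sequence of integer vectors: the `l`-dimensional volume of the
parallelepiped spanned by `z̲_k, …, z̲_{k+l-1}`. -/
def detL (d : ℕ) (z : ℕ → Fin d → ℤ) (k l : ℕ) : ℝ :=
  gramVol (fun i : Fin l => pr d (toE d (z (k + i.1))))

/-- `D_{k,l} = det Λ̲_{k,l} / |z̲_k|^l`. -/
def Dq (d : ℕ) (z : ℕ → Fin d → ℤ) (k l : ℕ) : ℝ :=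
  detL d z k l / ‖pr d (toE d (z k))‖ ^ l

/-- `B_k = |z̲_{k+1}| / |z̲_k|`. -/
def Bq (d : ℕ) (z : ℕ → Fin d → ℤ) (k : ℕ) : ℝ :=
  ‖pr d (toE d (z (k + 1)))‖ / ‖pr d (toE d (z k))‖

/-- `R_k = 1 / (2 |z̲_{k+1}| det Λ̲_{k,d-1})`. -/
def Rq (d : ℕ) (z : ℕ → Fin d → ℤ) (k : ℕ) : ℝ :=
  1 / (2 * ‖pr d (toE d (z (k + 1)))‖ * detL d z k (d - 1))

/-- `v 0, …, v (d-1)` form a basis of the lattice `ℤ^d`. -/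
def IsZBasis (d : ℕ) (v : Fin d → Fin d → ℤ) : Prop :=
  IsUnit ((Matrix.of (fun i j : Fin d => v j i)).det)

section Aux

open Matrix

lemma gramVol_eq_abs_det' {n : ℕ} (v : Fin n → E n) :
    gramVol v = |(Matrix.of fun i j : Fin n => v j i).det| := by
  set A : Matrix (Fin n) (Fin n) ℝ := Matrix.of fun i j => v j i with hA
  have h : Matrix.of (fun i j : Fin n => ⟪v i, v j⟫_ℝ) = Aᵀ * A := by
    ext i j
    simp [Matrix.mul_apply, hA, PiLp.inner_apply, RCLike.inner_apply]
    exact Finset.sum_congr rfl fun _ _ => mul_comm _ _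
  rw [gramVol, h, Matrix.det_mul, Matrix.det_transpose, ← sq, Real.sqrt_sq_eq_abs]

lemma norm_pr_le' (k : ℕ) (x : E (k + 1)) : ‖pr (k + 1) x‖ ≤ ‖x‖ := by
  rw [EuclideanSpace.norm_eq, EuclideanSpace.norm_eq]
  apply Real.sqrt_le_sqrt
  rw [Fin.sum_univ_castSucc (f := fun i => ‖x i‖ ^ 2)]
  have h : (∑ i : Fin (k + 1 - 1), ‖pr (k + 1) x i‖ ^ 2) = ∑ i : Fin k, ‖x i.castSucc‖ ^ 2 := rfl
  rw [h]
  exact le_add_of_nonneg_right (by positivity)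

lemma inner_split' (k : ℕ) (x y : E (k + 1)) :
    ⟪x, y⟫_ℝ = ⟪pr (k + 1) x, pr (k + 1) y⟫_ℝ + x (Fin.last k) * y (Fin.last k) := by
  simp only [PiLp.inner_apply, RCLike.inner_apply, starRingEnd_apply, star_trivial]
  rw [Fin.sum_univ_castSucc (f := fun i => y i * x i)]
  rw [mul_comm (y (Fin.last k))]
  rfl

/-- column reindexing: new column `inl j` is old column `j+1`, new column `inr` is old column 0. -/
def colEquiv (k : ℕ) : (Fin k ⊕ Fin 1) ≃ Fin (k + 1) where
  toFun := Sum.elim Fin.succ (fun _ => 0)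
  invFun x := if h : x.1 = 0 then Sum.inr 0 else Sum.inl ⟨x.1 - 1, by omega⟩
  left_inv := by
    rintro (j | i)
    · simp [Fin.ext_iff]
    · simp [Fin.eq_zero i]
  right_inv := by
    intro x
    by_cases h : x.1 = 0
    · dsimp only
      rw [dif_pos h]
      simp only [Sum.elim_inr]
      rw [Fin.ext_iff]
      simp
      omega
    · dsimp only
      rw [dif_neg h]
      simp only [Sum.elim_inl]
      rw [Fin.ext_iff, Fin.val_succ]
      simp
      omega

/-- row reindexing: new row `inl i` is old row `i`, new row `inr` is old row `last`. -/
def rowEquiv (k : ℕ) : (Fin k ⊕ Fin 1) ≃ Fin (k + 1) where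
  toFun := Sum.elim Fin.castSucc (fun _ => Fin.last k)
  invFun x := if h : x.1 < k then Sum.inl ⟨x.1, h⟩ else Sum.inr 0
  left_inv := by
    rintro (j | i)
    · simp [Fin.ext_iff]
    · simp [Fin.eq_zero i, Fin.last]
  right_inv := by
    intro x
    by_cases h : x.1 < k
    · simp [h, Fin.ext_iff]
    · have : x = Fin.last k := by rw [Fin.ext_iff]; simp [Fin.last]; omega
      simp [h, this]

lemma det_identity' (k : ℕ) (z : ℕ → Fin (k + 1) → ℤ) (α2 : E (k + 1))
    (hpi : α2 (Fin.last k) = 1)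
    (hperp : ∀ i : Fin k, ⟪α2, toE (k + 1) (z (i.1 + 2))⟫_ℝ = 0) :
    |⟪α2, toE (k + 1) (z 1)⟫_ℝ| * detL (k + 1) z 2 k =
      |(Matrix.of fun i j : Fin (k + 1) => ((z (j.1 + 1) i : ℝ))).det| := by
  set A : Matrix (Fin (k + 1)) (Fin (k + 1)) ℝ :=
    Matrix.of fun i j : Fin (k + 1) => ((z (j.1 + 1) i : ℝ)) with hAdef
  set r : Fin (k + 1) → ℝ := ∑ i, α2 i • A i with hrdef
  have hr : ∀ j : Fin (k + 1), r j = ⟪α2, toE (k + 1) (z (j.1 + 1))⟫_ℝ := by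
    intro j
    simp [hrdef, Finset.sum_apply, PiLp.inner_apply, RCLike.inner_apply, hAdef, toE, mul_comm]
  set M' : Matrix (Fin (k + 1)) (Fin (k + 1)) ℝ := A.updateRow (Fin.last k) r with hM'def
  have hdet1 : M'.det = A.det := by
    rw [hM'def, hrdef, Matrix.det_updateRow_sum A (Fin.last k) (fun i => α2 i), hpi, one_smul]
  set C : Matrix (Fin k) (Fin k) ℝ :=
    Matrix.of fun i j : Fin k => pr (k + 1) (toE (k + 1) (z (2 + j.1))) i with hCdef
  set B : Matrix (Fin k) (Fin 1) ℝ := Matrix.of fun i _ => ((z 1 i.castSucc : ℝ)) with hBdef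
  set D : Matrix (Fin 1) (Fin 1) ℝ :=
    Matrix.of fun _ _ => ⟪α2, toE (k + 1) (z 1)⟫_ℝ with hDdef
  have hN : M'.submatrix (rowEquiv k) (colEquiv k) = Matrix.fromBlocks C B 0 D := by
    ext p q
    rcases p with i | i <;> rcases q with j | j
    · show M' (Fin.castSucc i) (Fin.succ j) = C i j
      rw [hM'def, Matrix.updateRow_ne (by simp [Fin.ext_iff]; omega)]
      show ((z (j.1 + 1 + 1) (Fin.castSucc i) : ℝ)) = _
      rw [hCdef]
      show _ = ((z (2 + j.1) (Fin.castLE (Nat.sub_le (k + 1) 1) i) : ℝ))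
      have h1 : j.1 + 1 + 1 = 2 + j.1 := by omega
      have h2 : Fin.castSucc i = Fin.castLE (Nat.sub_le (k + 1) 1) i := rfl
      rw [h1, h2]
    · show M' (Fin.castSucc i) 0 = B i j
      rw [hM'def, Matrix.updateRow_ne (by simp [Fin.ext_iff]; omega)]
      show ((z ((0 : Fin (k + 1)).1 + 1) (Fin.castSucc i) : ℝ)) = ((z 1 i.castSucc : ℝ))
      norm_num
    · show M' (Fin.last k) (Fin.succ j) = 0
      rw [hM'def, Matrix.updateRow_self, hr]
      have : (Fin.succ j).1 + 1 = j.1 + 2 := by simp [Fin.val_succ]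
      rw [this]
      exact hperp j
    · show M' (Fin.last k) 0 = D j j
      rw [hM'def, Matrix.updateRow_self, hr, hDdef]
      norm_num
  have habs : |(M'.submatrix (rowEquiv k) (colEquiv k)).det| = |M'.det| :=
    Matrix.abs_det_submatrix_equiv_equiv _ _ _
  have hblock : (Matrix.fromBlocks C B 0 D).det = C.det * D.det :=
    Matrix.det_fromBlocks_zero₂₁ _ _ _
  have hD : D.det = ⟪α2, toE (k + 1) (z 1)⟫_ℝ := by
    rw [Matrix.det_fin_one]; rfl
  have hdetL : detL (k + 1) z 2 k = |C.det| := by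
    rw [detL]
    exact gramVol_eq_abs_det' (fun i : Fin k => pr (k + 1) (toE (k + 1) (z (2 + i.1))))
  rw [hdetL, ← abs_mul, mul_comm, ← hD, ← hblock, ← hN, habs, hdet1]

end Aux

theorem stmt12 (d : ℕ) (hd : 3 ≤ d) (z : ℕ → Fin d → ℤ)
    (hbasis : IsZBasis d (fun j => z (j.1 + 1)))
    (hlip1 : LinearIndependent ℝ (fun i : Fin (d - 1) => pr d (toE d (z (i.1 + 1)))))
    (hlip2 : LinearIndependent ℝ (fun i : Fin (d - 1) => pr d (toE d (z (i.1 + 2)))))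
    (h12 : ‖pr d (toE d (z 1))‖ ≤ ‖pr d (toE d (z 2))‖)
    (h23 : ‖pr d (toE d (z 2))‖ ≤ ‖pr d (toE d (z 3))‖)
    (hneg : ⟪pr d (toE d (z 1)), pr d (toE d (z 2))⟫_ℝ ≤ 0)
    (hdets : ∀ n, 3 ≤ n → n ≤ d - 1 →
      ‖pr d (toE d (z 2))‖ * detL d z 1 (n - 1) < detL d z 1 n)
    (α1 : E d) (hα1pi : α1 ⟨d - 1, by omega⟩ = 1)
    (hα1perp : ∀ i : Fin (d - 1), ⟪α1, toE d (z (i.1 + 1))⟫_ℝ = 0)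
    (α2 : E d) (hα2pi : α2 ⟨d - 1, by omega⟩ = 1)
    (hα2perp : ∀ i : Fin (d - 1), ⟪α2, toE d (z (i.1 + 2))⟫_ℝ = 0)
    (α : E d) (hαpi : α ⟨d - 1, by omega⟩ = 1)
    (hαS1 : ‖α - α1‖ ≤ Rq d z 1) (hαS2 : ‖α - α2‖ < Rq d z 2)
    (hsign : 0 ≤ ⟪α, toE d (z 2)⟫_ℝ * ⟪α2, toE d (z 1)⟫_ℝ) :
    1 / (2 * Dq d z 2 (d - 1) * Bq d z 1 ^ (d - 1)) ≤
        |⟪α, toE d (z 1)⟫_ℝ| * ‖pr d (toE d (z 1))‖ ^ (d - 1) ∧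
      |⟪α, toE d (z 1)⟫_ℝ| * ‖pr d (toE d (z 1))‖ ^ (d - 1) ≤
        3 / (2 * Dq d z 2 (d - 1) * Bq d z 1 ^ (d - 1)) := by
  obtain ⟨k, rfl⟩ : ∃ k, d = k + 1 := ⟨d - 1, by omega⟩
  have hk2 : 2 ≤ k := by omega
  -- abbreviations
  set n1 : ℝ := ‖pr (k + 1) (toE (k + 1) (z 1))‖ with hn1def
  set n2 : ℝ := ‖pr (k + 1) (toE (k + 1) (z 2))‖ with hn2def
  set n3 : ℝ := ‖pr (k + 1) (toE (k + 1) (z 3))‖ with hn3def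
  set L : ℝ := detL (k + 1) z 2 k with hLdef
  set t : ℝ := ⟪α2, toE (k + 1) (z 1)⟫_ℝ with htdef
  set I : ℝ := ⟪α, toE (k + 1) (z 1)⟫_ℝ with hIdef
  -- positivity of norms
  have hn1pos : 0 < n1 := by
    rw [hn1def, norm_pos_iff]
    have := hlip1.ne_zero (⟨0, by omega⟩ : Fin (k + 1 - 1))
    simpa using this
  have hn3pos : 0 < n3 := by
    rw [hn3def, norm_pos_iff]
    have := hlip2.ne_zero (⟨1, by omega⟩ : Fin (k + 1 - 1))
    simpa using this
  have hn2pos : 0 < n2 := lt_of_lt_of_le hn1pos h12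
  -- |t| * L = 1
  have hunit : (Matrix.of fun i j : Fin (k + 1) => z (j.1 + 1) i).det = 1 ∨
      (Matrix.of fun i j : Fin (k + 1) => z (j.1 + 1) i).det = -1 :=
    Int.isUnit_iff.mp hbasis
  have hmap : (Matrix.of fun i j : Fin (k + 1) => ((z (j.1 + 1) i : ℝ))).det =
      (((Matrix.of fun i j : Fin (k + 1) => z (j.1 + 1) i).det : ℤ) : ℝ) := by
    have hmat : (Matrix.of fun i j : Fin (k + 1) => ((z (j.1 + 1) i : ℝ))) =
        (Matrix.of fun i j : Fin (k + 1) => z (j.1 + 1) i).map (Int.castRingHom ℝ) := by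
      ext i j
      simp
    rw [hmat, ← RingHom.mapMatrix_apply, ← RingHom.map_det]
    simp
  have hA1 : |(Matrix.of fun i j : Fin (k + 1) => ((z (j.1 + 1) i : ℝ))).det| = 1 := by
    rw [hmap]
    rcases hunit with h | h <;> rw [h] <;> norm_num
  have hkey : |t| * L = 1 := by
    rw [htdef, hLdef]
    rw [det_identity' k z α2 hα2pi (fun i => hα2perp i)]
    exact hA1
  have hLnn : 0 ≤ L := by rw [hLdef]; unfold detL gramVol; exact Real.sqrt_nonneg _
  have hLpos : 0 < L := by
    rcases hLnn.eq_or_lt with h | h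
    · rw [← h, mul_zero] at hkey; norm_num at hkey
    · exact h
  have htabs : |t| = 1 / L := by
    field_simp
    linarith [hkey]
  -- |I - t| ≤ 1 / (2 L)
  have hzero : (α - α2) (Fin.last k) = 0 := by
    have h1 : α (Fin.last k) = 1 := hαpi
    have h2 : α2 (Fin.last k) = 1 := hα2pi
    simp [PiLp.sub_apply, h1, h2]
  have hsplit := inner_split' k (α - α2) (toE (k + 1) (z 1))
  rw [hzero, zero_mul, add_zero] at hsplit
  have hIt : I - t = ⟪pr (k + 1) (α - α2), pr (k + 1) (toE (k + 1) (z 1))⟫_ℝ := by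
    rw [hIdef, htdef, ← inner_sub_left, hsplit]
  have hR2 : ‖α - α2‖ < 1 / (2 * n3 * L) := by
    have := hαS2
    rw [Rq] at this
    simpa [Nat.add_sub_cancel, ← hn3def, ← hLdef] using this
  have hclose : |I - t| ≤ 1 / (2 * L) := by
    have hb1 : |I - t| ≤ ‖pr (k + 1) (α - α2)‖ * n1 := by
      rw [hIt, hn1def]
      exact abs_real_inner_le_norm _ _
    have hb2 : ‖pr (k + 1) (α - α2)‖ ≤ ‖α - α2‖ := norm_pr_le' k _
    have hb3 : |I - t| ≤ ‖α - α2‖ * n1 :=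
      hb1.trans (mul_le_mul_of_nonneg_right hb2 (le_of_lt hn1pos))
    have hb4 : ‖α - α2‖ * n1 ≤ (1 / (2 * n3 * L)) * n1 :=
      mul_le_mul_of_nonneg_right (le_of_lt hR2) (le_of_lt hn1pos)
    have hb5 : (1 / (2 * n3 * L)) * n1 ≤ 1 / (2 * L) := by
      rw [div_mul_eq_mul_div, one_mul, div_le_div_iff₀ (by positivity) (by positivity)]
      nlinarith [h12.trans h23, hn1pos, hLpos]
    linarith
  -- the two bounds on |I|
  have hup : |I| ≤ 3 / (2 * L) := by
    have h1 : |I| - |t| ≤ |I - t| := abs_sub_abs_le_abs_sub I t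
    have h2 : 1 / L + 1 / (2 * L) = 3 / (2 * L) := by field_simp; ring
    linarith [htabs ▸ h1, hclose]
  have hlo : 1 / (2 * L) ≤ |I| := by
    have h1 : |t| - |I| ≤ |I - t| := by
      have := abs_sub_abs_le_abs_sub t I
      rwa [abs_sub_comm] at this
    have h2 : 1 / L - 1 / (2 * L) = 1 / (2 * L) := by field_simp; ring
    linarith [htabs ▸ h1, hclose]
  -- rewrite the goal
  simp only [Nat.add_sub_cancel]
  rw [Dq, Bq]
  simp only [Nat.add_sub_cancel, ← hn1def, ← hn2def, ← hLdef, ← hIdef]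
  have hLne : L ≠ 0 := ne_of_gt hLpos
  have hn1ne : n1 ≠ 0 := ne_of_gt hn1pos
  have hn2ne : n2 ≠ 0 := ne_of_gt hn2pos
  have heq : 1 / (2 * (L / n2 ^ k) * (n2 / n1) ^ k) = n1 ^ k / (2 * L) := by
    rw [div_pow]
    field_simp
  have heq3 : 3 / (2 * (L / n2 ^ k) * (n2 / n1) ^ k) = 3 * n1 ^ k / (2 * L) := by
    rw [div_pow]
    field_simp
  rw [heq, heq3]
  constructor
  · calc n1 ^ k / (2 * L) = (1 / (2 * L)) * n1 ^ k := by ring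
    _ ≤ |I| * n1 ^ k := mul_le_mul_of_nonneg_right hlo (by positivity)
  · calc |I| * n1 ^ k ≤ (3 / (2 * L)) * n1 ^ k :=
        mul_le_mul_of_nonneg_right hup (by positivity)
    _ = 3 * n1 ^ k / (2 * L) := by ring
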